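/- For every k ∈ ℕ and every m ∈ ℕ, the map h_{k,m} : Σ_k → Σ_k given by h_{k,m}(x) = stem(b^m·x) is well defined (i.e. stem(b^m·x) again lies in Σ_k) and is a bijection of Σ_k onto Σ_k. -/

import Mathlib

open scoped Classical

namespace BSpaper

/-- The single Baumslag–Solitar relator `a * b^c * (b^d * a)⁻¹` on two generators
(`true` plays the role of `a`, `false` the role of `b`). -/
def rels (c d : ℕ) : Set (FreeGroup Bool) :=
  {FreeGroup.of true * FreeGroup.of false ^ c * (FreeGroup.of false ^ d * FreeGroup.of true)⁻¹}

/-- The Baumslag–Solitar group `BS(c,d) = ⟨a, b ∣ a b^c = b^d a⟩`. -/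
abbrev Grp (c d : ℕ) := PresentedGroup (rels c d)

variable (c d : ℕ)

/-- The generator `a`. -/
def a : Grp c d := PresentedGroup.of true

/-- The generator `b`. -/
def b : Grp c d := PresentedGroup.of false

/-- The submonoid `P` of `BS(c,d)` generated by `a` and `b`. -/
def P : Submonoid (Grp c d) := Submonoid.closure {a c d, b c d}

/-- The word `b^{s₀} a b^{s₁} a ⋯ b^{s_{k-1}} a` associated to a list of digits `s_i < d`. -/
def wordStem : List (Fin d) → Grp c d
  | [] => 1
  | i :: l => b c d ^ (i : ℕ) * a c d * wordStem l

/-- `Σ_k`: the set of stems of height `k`. -/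
def SigmaSet (k : ℕ) : Set (Grp c d) :=
  {g | ∃ l : List (Fin d), l.length = k ∧ wordStem c d l = g}

/-- The data `(l, t)` of a normal-form decomposition `x = (b^{s₀} a ⋯ b^{s_{k-1}} a) * b^t`,
chosen by choice when it exists (it exists, uniquely, for every `x ∈ P`). -/
noncomputable def nf (x : Grp c d) : List (Fin d) × ℕ :=
  if h : ∃ p : List (Fin d) × ℕ, x = wordStem c d p.1 * b c d ^ p.2 then h.choose else ([], 0)

/-- The stem of `x`, i.e. the stem part of the normal form of `x`. -/
noncomputable def stem (x : Grp c d) : Grp c d := wordStem c d (nf c d x).1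

/-- The left-invariant partial order on `BS(c,d)`: `g ≤ h` iff `g⁻¹ * h ∈ P`. -/
def bsLe (g h : Grp c d) : Prop := g⁻¹ * h ∈ P c d

lemma a_mem_P : a c d ∈ P c d := Submonoid.subset_closure (Set.mem_insert _ _)

lemma b_mem_P : b c d ∈ P c d :=
  Submonoid.subset_closure (Set.mem_insert_of_mem _ rfl)

lemma wordStem_mem_P (l : List (Fin d)) : wordStem c d l ∈ P c d := by
  induction l with
  | nil => exact one_mem _
  | cons i l ih =>
      exact mul_mem (mul_mem (pow_mem (b_mem_P c d) _) (a_mem_P c d)) ih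

/-! ### Auxiliary theory: embedding into an HNN extension of `ℤ` -/

open Multiplicative

/-- The subgroup of `Multiplicative ℤ` generated by `ofAdd c`. -/
def Az (c : ℤ) : Subgroup (Multiplicative ℤ) := Subgroup.zpowers (Multiplicative.ofAdd c)

lemma mem_Az {c : ℤ} {g : Multiplicative ℤ} : g ∈ Az c ↔ c ∣ g.toAdd := by
  constructor
  · rintro ⟨n, rfl⟩
    refine ⟨n, ?_⟩
    rw [toAdd_zpow, toAdd_ofAdd, smul_eq_mul, mul_comm]
  · rintro ⟨n, hn⟩
    refine ⟨n, Multiplicative.toAdd.injective ?_⟩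
    rw [toAdd_zpow, toAdd_ofAdd, smul_eq_mul, mul_comm, hn]

/-- The isomorphism `cℤ ≃ dℤ`. -/
def phiAB (c d : ℤ) (hc : c ≠ 0) (hd : d ≠ 0) : Az c ≃* Az d where
  toFun g := ⟨ofAdd (g.1.toAdd / c * d), mem_Az.2 ⟨g.1.toAdd / c, by rw [toAdd_ofAdd]; ring⟩⟩
  invFun g := ⟨ofAdd (g.1.toAdd / d * c), mem_Az.2 ⟨g.1.toAdd / d, by rw [toAdd_ofAdd]; ring⟩⟩
  left_inv g := by
    obtain ⟨n, hn⟩ := mem_Az.1 g.2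
    ext
    refine Multiplicative.toAdd.injective ?_
    simp only [toAdd_ofAdd]
    rw [hn, Int.mul_ediv_cancel_left _ hc, Int.mul_ediv_cancel _ hd, mul_comm]
  right_inv g := by
    obtain ⟨n, hn⟩ := mem_Az.1 g.2
    ext
    refine Multiplicative.toAdd.injective ?_
    simp only [toAdd_ofAdd]
    rw [hn, Int.mul_ediv_cancel_left _ hd, Int.mul_ediv_cancel _ hc, mul_comm]
  map_mul' g h := by
    obtain ⟨n, hn⟩ := mem_Az.1 g.2
    obtain ⟨m, hm⟩ := mem_Az.1 h.2
    ext
    refine Multiplicative.toAdd.injective ?_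
    simp only [Subgroup.coe_mul, toAdd_mul, toAdd_ofAdd]
    rw [hn, hm, ← mul_add, Int.mul_ediv_cancel_left _ hc, Int.mul_ediv_cancel_left _ hc,
      Int.mul_ediv_cancel_left _ hc]
    ring

lemma phiAB_apply (c d : ℤ) (hc : c ≠ 0) (hd : d ≠ 0) (g : Az c) :
    ((phiAB c d hc hd g : Az d) : Multiplicative ℤ) =
      ofAdd ((g : Multiplicative ℤ).toAdd / c * d) := rfl

variable {c d}
variable (hc : 0 < c) (hd : 0 < d)

/-- The target HNN extension, isomorphic to `BS(c,d)`. -/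
abbrev HN (hc : 0 < c) (hd : 0 < d) : Type :=
  HNNExtension (Multiplicative ℤ) (Az (c : ℤ)) (Az (d : ℤ))
    (phiAB c d (by exact_mod_cast hc.ne') (by exact_mod_cast hd.ne'))

abbrev phi' (hc : 0 < c) (hd : 0 < d) := phiAB (c:ℤ) (d:ℤ)
  (by exact_mod_cast hc.ne') (by exact_mod_cast hd.ne')

lemma of_pow_eq (n : ℕ) :
    (HNNExtension.of (ofAdd (1:ℤ)) : HN hc hd) ^ n = HNNExtension.of (ofAdd (n:ℤ)) := by
  rw [← map_pow]
  congr 1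
  refine Multiplicative.toAdd.injective ?_
  simp

lemma hn_rel : HNNExtension.t * (HNNExtension.of (ofAdd (c:ℤ)) : HN hc hd) =
    HNNExtension.of (ofAdd (d:ℤ)) * HNNExtension.t := by
  have := HNNExtension.t_mul_of (φ := phi' hc hd) ⟨ofAdd (c:ℤ), mem_Az.2 ⟨1, by simp⟩⟩
  convert this using 3
  rw [phiAB_apply]
  simp only [toAdd_ofAdd]
  rw [Int.ediv_self (by exact_mod_cast hc.ne'), one_mul]

/-- The homomorphism `ψ` from `BS(c,d)` to the HNN extension. -/
noncomputable def psi : Grp c d →* HN hc hd :=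
  PresentedGroup.toGroup
    (f := fun x => if x then HNNExtension.t else HNNExtension.of (ofAdd (1:ℤ)))
    (by
      rintro r hr
      rcases hr with rfl
      simp only [map_mul, map_inv, map_pow, FreeGroup.lift_apply_of]
      norm_num
      rw [of_pow_eq hc hd, of_pow_eq hc hd, ← mul_inv_rev, mul_inv_eq_one]
      exact hn_rel hc hd)

lemma psi_a : psi hc hd (a c d) = HNNExtension.t := by
  simp [psi, a, PresentedGroup.toGroup.of]

lemma psi_b : psi hc hd (b c d) = HNNExtension.of (ofAdd (1:ℤ)) := by
  simp [psi, b, PresentedGroup.toGroup.of]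

open HNNExtension

/-- Positive words in the HNN extension. -/
noncomputable def pw (hc : 0 < c) (hd : 0 < d) : List ℤ → ℤ → HN hc hd
  | [], s => HNNExtension.of (ofAdd s)
  | x :: l, s => HNNExtension.of (ofAdd x) * HNNExtension.t * pw hc hd l s

/-- The reduced word `of (ofAdd s) * Π (t * of (ofAdd x))`. -/
def rw' (s : ℤ) (l : List ℤ) :
    HNNExtension.NormalWord.ReducedWord (Multiplicative ℤ) (Az (c:ℤ)) (Az (d:ℤ)) where
  head := ofAdd s
  toList := l.map (fun x => ((1 : ℤˣ), ofAdd x))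
  chain := by
    rw [List.isChain_map]
    exact List.Pairwise.isChain (List.pairwise_of_forall (fun _ _ => fun _ => rfl))

lemma rw'_prod (s : ℤ) (l : List ℤ) :
    (rw' (c := c) (d := d) s l).prod (phi' hc hd) =
      HNNExtension.of (ofAdd s) *
        (l.map (fun x => HNNExtension.t * HNNExtension.of (ofAdd x))).prod := by
  unfold NormalWord.ReducedWord.prod rw'
  rw [List.map_map]
  refine congrArg (fun z => HNNExtension.of (ofAdd s) * z)
    (congrArg List.prod (List.map_congr_left (fun x _ => ?_)))
  show HNNExtension.t ^ ((1:ℤˣ):ℤ) * _ = _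
  norm_num

lemma pw_cons_eq_prod (s : ℤ) (l : List ℤ) (u : ℤ) :
    pw hc hd (s :: l) u = (rw' s (l ++ [u])).prod (phi' hc hd) := by
  rw [rw'_prod]
  induction l generalizing s with
  | nil => simp [pw, mul_assoc]
  | cons x l ih =>
      rw [pw, ih x]
      simp [rw'_prod, mul_assoc]

lemma pw_nil_eq_prod (u : ℤ) :
    pw hc hd ([] : List ℤ) u = (rw' u []).prod (phi' hc hd) := by
  rw [rw'_prod]
  simp [pw]

/-- Uniqueness of positive normal forms in the HNN extension. -/
lemma pw_inj : ∀ (l1 : List ℤ) (l2 : List ℤ) (t1 t2 : ℤ),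
    (∀ x ∈ l1, 0 ≤ x ∧ x < d) → (∀ x ∈ l2, 0 ≤ x ∧ x < d) →
    pw hc hd l1 t1 = pw hc hd l2 t2 → l1 = l2 ∧ t1 = t2 := by
  intro l1
  induction l1 with
  | nil =>
      rintro (_ | ⟨s2, l2⟩) t1 t2 h1 h2 heq
      · refine ⟨rfl, ?_⟩
        have := HNNExtension.of_injective (phi' hc hd) (by simpa [pw] using heq)
        exact Multiplicative.ofAdd.injective this
      · rw [pw_nil_eq_prod, pw_cons_eq_prod] at heq
        have := (ReducedWord.map_fst_eq_and_of_prod_eq _ heq).1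
        simp [rw'] at this
  | cons s1 l1 ih =>
      rintro (_ | ⟨s2, l2⟩) t1 t2 h1 h2 heq
      · rw [pw_nil_eq_prod, pw_cons_eq_prod] at heq
        have := (ReducedWord.map_fst_eq_and_of_prod_eq _ heq).1
        simp [rw'] at this
      · have heq' := heq
        rw [pw_cons_eq_prod, pw_cons_eq_prod] at heq'
        have h := (ReducedWord.map_fst_eq_and_of_prod_eq _ heq').2
        have hs : s1 = s2 := by
          have h1' := h 1 (by rcases l1 with _|⟨x,l⟩ <;> simp [rw'])
          rw [HNNExtension.toSubgroup_neg_one] at h1'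
          have hdvd : (d : ℤ) ∣ (s2 - s1) := by
            have := mem_Az.1 h1'
            simpa [rw', sub_eq_neg_add] using this
          have hb1 := h1 s1 List.mem_cons_self
          have hb2 := h2 s2 List.mem_cons_self
          have := Int.eq_zero_of_abs_lt_dvd hdvd (by
            rw [abs_lt]; omega)
          omega
        subst hs
        rw [pw, pw] at heq
        have heq2 : pw hc hd l1 t1 = pw hc hd l2 t2 := mul_left_cancel heq
        obtain ⟨hl, ht⟩ := ih l2 t1 t2 (fun x hx => h1 x (List.mem_cons_of_mem _ hx))
          (fun x hx => h2 x (List.mem_cons_of_mem _ hx)) heq2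
        exact ⟨by rw [hl], ht⟩

lemma psi_bpow (n : ℕ) :
    psi hc hd (b c d ^ n) = HNNExtension.of (ofAdd (n:ℤ)) := by
  rw [map_pow, psi_b, of_pow_eq hc hd]

lemma psi_word (l : List (Fin d)) (n : ℕ) :
    psi hc hd (wordStem c d l * b c d ^ n) =
      pw hc hd (l.map (fun i : Fin d => ((i:ℕ):ℤ))) n := by
  induction l with
  | nil =>
      rw [wordStem, one_mul, psi_bpow]
      rfl
  | cons i l ih =>
      rw [wordStem, mul_assoc, mul_assoc, map_mul, map_mul, psi_bpow, psi_a,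
        ← mul_assoc, ih, List.map_cons]
      rfl

include hc hd in
/-- Uniqueness of normal forms in `BS(c,d)`. -/
lemma word_unique {l1 l2 : List (Fin d)} {t1 t2 : ℕ}
    (h : wordStem c d l1 * b c d ^ t1 = wordStem c d l2 * b c d ^ t2) :
    l1 = l2 ∧ t1 = t2 := by
  have h' := congrArg (psi hc hd) h
  rw [psi_word hc hd, psi_word hc hd] at h'
  obtain ⟨hl, ht⟩ := pw_inj hc hd _ _ _ _
    (by
      rintro x hx
      obtain ⟨i, _, rfl⟩ := List.mem_map.1 hx
      exact ⟨Int.natCast_nonneg _, by exact_mod_cast i.isLt⟩)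
    (by
      rintro x hx
      obtain ⟨i, _, rfl⟩ := List.mem_map.1 hx
      exact ⟨Int.natCast_nonneg _, by exact_mod_cast i.isLt⟩) h'
  refine ⟨?_, by exact_mod_cast ht⟩
  refine List.map_injective_iff.2 (fun i j hij => ?_) hl
  exact Fin.ext (by exact_mod_cast hij)

include hc hd in
lemma nf_spec (l : List (Fin d)) (n : ℕ) :
    nf c d (wordStem c d l * b c d ^ n) = (l, n) := by
  have hex : ∃ p : List (Fin d) × ℕ,
      wordStem c d l * b c d ^ n = wordStem c d p.1 * b c d ^ p.2 := ⟨(l, n), rfl⟩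
  rw [nf, dif_pos hex]
  obtain ⟨h1, h2⟩ := word_unique hc hd hex.choose_spec
  exact Prod.ext h1.symm h2.symm

include hc hd in
lemma stem_spec (l : List (Fin d)) (n : ℕ) :
    stem c d (wordStem c d l * b c d ^ n) = wordStem c d l := by
  rw [stem, nf_spec hc hd]

/-! ### The carrying process -/

/-- The relation `b^d a = a b^c` in `BS(c,d)`. -/
lemma bs_rel (c d : ℕ) : b c d ^ d * a c d = a c d * b c d ^ c := by
  have h1 : (a c d * b c d ^ c) * (b c d ^ d * a c d)⁻¹ = 1 := by
    have h2 : a c d * b c d ^ c * (b c d ^ d * a c d)⁻¹ =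
        PresentedGroup.mk (rels c d) (FreeGroup.of true * FreeGroup.of false ^ c *
          (FreeGroup.of false ^ d * FreeGroup.of true)⁻¹) := by
      simp only [map_mul, map_inv, map_pow]
      rfl
    rw [h2]
    exact (QuotientGroup.eq_one_iff _).2
      (Subgroup.subset_normalClosure rfl)
  exact (mul_inv_eq_one.1 h1).symm

lemma bs_rel_pow (c d : ℕ) (q : ℕ) : b c d ^ (q * d) * a c d = a c d * b c d ^ (q * c) := by
  induction q with
  | zero => simp
  | succ q ih =>
      rw [Nat.succ_mul, Nat.succ_mul, pow_add, pow_add, mul_assoc, bs_rel,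
        ← mul_assoc, ih, mul_assoc]

/-- Carrying: given `m` and digit list `l`, produce the digit list and the tail exponent
with `b^m ⬝ wordStem l = wordStem l' ⬝ b^t`. -/
def carryL (c : ℕ) {d : ℕ} (hd : 0 < d) : ℕ → List (Fin d) → List (Fin d) × ℕ
  | m, [] => ([], m)
  | m, s :: l =>
      let p := carryL c hd (((m + (s:ℕ)) / d) * c) l
      (⟨(m + (s:ℕ)) % d, Nat.mod_lt _ hd⟩ :: p.1, p.2)

lemma carryL_length : ∀ (m : ℕ) (l : List (Fin d)),
    (carryL c hd m l).1.length = l.length := by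
  intro m l
  induction l generalizing m with
  | nil => rfl
  | cons s l ih => simp [carryL, ih]

lemma carry_eq (m : ℕ) (l : List (Fin d)) :
    b c d ^ m * wordStem c d l =
      wordStem c d (carryL c hd m l).1 * b c d ^ (carryL c hd m l).2 := by
  induction l generalizing m with
  | nil => simp [wordStem, carryL]
  | cons s l ih =>
      have hsplit : m + (s:ℕ) = ((m + (s:ℕ)) % d) + ((m + (s:ℕ)) / d) * d := by
        rw [Nat.mod_add_div']
      calc b c d ^ m * wordStem c d (s :: l)
          = b c d ^ (m + (s:ℕ)) * a c d * wordStem c d l := by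
            rw [wordStem, pow_add]
            group
        _ = b c d ^ ((m + (s:ℕ)) % d) * (b c d ^ (((m + (s:ℕ)) / d) * d) * a c d) *
              wordStem c d l := by
            rw [← mul_assoc, ← pow_add, ← hsplit]
        _ = b c d ^ ((m + (s:ℕ)) % d) * a c d *
              (b c d ^ (((m + (s:ℕ)) / d) * c) * wordStem c d l) := by
            rw [bs_rel_pow]
            group
        _ = wordStem c d (carryL c hd m (s :: l)).1 * b c d ^ (carryL c hd m (s :: l)).2 := by
            rw [ih, carryL, wordStem]
            group

lemma carry_inj : ∀ (l1 l2 : List (Fin d)) (m : ℕ), l1.length = l2.length →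
    (carryL c hd m l1).1 = (carryL c hd m l2).1 → l1 = l2 := by
  intro l1
  induction l1 with
  | nil =>
      rintro (_ | ⟨s2, l2⟩) m hlen _
      · rfl
      · simp at hlen
  | cons s1 l1 ih =>
      rintro (_ | ⟨s2, l2⟩) m hlen heq
      · simp at hlen
      · simp only [carryL, List.cons.injEq] at heq
        have hmod : (m + (s1:ℕ)) % d = (m + (s2:ℕ)) % d := by
          have := heq.1
          exact congrArg Fin.val this
        have hs : s1 = s2 := by
          have hmeq : (s1:ℕ) % d = (s2:ℕ) % d :=
            Nat.ModEq.add_left_cancel' m hmod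
          rw [Nat.mod_eq_of_lt s1.isLt, Nat.mod_eq_of_lt s2.isLt] at hmeq
          exact Fin.ext hmeq
        subst hs
        have := ih l2 (((m + (s1:ℕ)) / d) * c) (by simpa using hlen) heq.2
        rw [this]

/-- Inverse of the carrying process on digit lists. -/
def uncarryL (c : ℕ) {d : ℕ} (hd : 0 < d) : ℕ → List (Fin d) → List (Fin d)
  | _, [] => []
  | m, r :: l =>
      let s : ℕ := ((r : ℕ) + d - m % d) % d
      ⟨s, Nat.mod_lt _ hd⟩ :: uncarryL c hd (((m + s) / d) * c) l

lemma uncarry_spec : ∀ (m : ℕ) (l : List (Fin d)),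
    (carryL c hd m (uncarryL c hd m l)).1 = l := by
  intro m l
  induction l generalizing m with
  | nil => rfl
  | cons r l ih =>
      have hm : m % d < d := Nat.mod_lt _ hd
      have hr : (r : ℕ) < d := r.isLt
      set s : ℕ := ((r : ℕ) + d - m % d) % d with hs
      have hslt : s < d := Nat.mod_lt _ hd
      have hmod : (m + s) % d = (r : ℕ) := by
        rw [Nat.add_mod, Nat.mod_eq_of_lt hslt]
        rcases le_or_gt (m % d) (r : ℕ) with hle | hlt
        · have hseq : s = (r : ℕ) - m % d := by
            rw [hs, Nat.mod_eq_sub_mod (by omega), Nat.mod_eq_of_lt (by omega)]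
            omega
          have h2 : m % d + s = (r : ℕ) := by omega
          rw [h2, Nat.mod_eq_of_lt hr]
        · have hseq : s = (r : ℕ) + d - m % d := by
            rw [hs, Nat.mod_eq_of_lt (by omega)]
          have h2 : m % d + s = (r : ℕ) + d := by omega
          rw [h2, Nat.add_mod_right, Nat.mod_eq_of_lt hr]
      show (carryL c hd m (⟨s, Nat.mod_lt _ hd⟩ :: uncarryL c hd (((m + s) / d) * c) l)).1
          = r :: l
      rw [carryL]
      simp only [List.cons.injEq]
      exact ⟨Fin.ext hmod, ih _⟩

lemma uncarry_length (m : ℕ) (l : List (Fin d)) :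
    (uncarryL c hd m l).length = l.length := by
  have h := congrArg List.length (uncarry_spec (c := c) hd m l)
  rw [carryL_length] at h
  exact h

end BSpaper

namespace BSpaper

/-- For every k, m ∈ ℕ, the map x ↦ stem(b^m·x) is a well-defined bijection of Σ_k onto Σ_k. -/
theorem statement1 (c d : ℕ) (hc : 0 < c) (hd : 0 < d) (k m : ℕ) :
    Set.BijOn (fun x => stem c d (b c d ^ m * x)) (SigmaSet c d k) (SigmaSet c d k) := by
  have key : ∀ l : List (Fin d), stem c d (b c d ^ m * wordStem c d l)
      = wordStem c d (carryL c hd m l).1 := by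
    intro l
    rw [carry_eq hd, stem_spec hc hd]
  refine ⟨?_, ?_, ?_⟩
  · rintro x ⟨l, hlen, rfl⟩
    exact ⟨(carryL c hd m l).1, by rw [carryL_length]; exact hlen, (key l).symm⟩
  · rintro x ⟨l1, hl1, rfl⟩ y ⟨l2, hl2, rfl⟩ hxy
    simp only at hxy
    rw [key, key] at hxy
    have hLL : (carryL c hd m l1).1 = (carryL c hd m l2).1 := by
      have h0 := word_unique hc hd
        (l1 := (carryL c hd m l1).1) (l2 := (carryL c hd m l2).1) (t1 := 0) (t2 := 0)
        (by simpa using hxy)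
      exact h0.1
    have := carry_inj hd l1 l2 m (by rw [hl1, hl2]) hLL
    rw [this]
  · rintro y ⟨l', hlen, rfl⟩
    refine ⟨wordStem c d (uncarryL c hd m l'), ⟨uncarryL c hd m l', ?_, rfl⟩, ?_⟩
    · rw [uncarry_length]
      exact hlen
    · simp only
      rw [key, uncarry_spec]

end BSpaper
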